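/- Let m ≥ 1 and let j₁ < j₂ < ⋯ < j_m be elements of ℤ. In the symmetric group, set t = (∏_{r odd, 1≤r≤m−1} (j_r, j_{r+1})) · (∏_{r even, 1≤r≤m−1} (j_r, j_{r+1})), where each product is over disjoint transpositions (so well-defined). Then t is a cycle of length m on the set {j₁,…,j_m}; in particular t has order m. -/

import Mathlib

/-- For `j₁ < ⋯ < j_m` in `ℤ` (given as `j 0, …, j (m-1)`), the permutation
`t = (∏_{r odd, 1≤r≤m−1} (j_r, j_{r+1})) · (∏_{r even, 1≤r≤m−1} (j_r, j_{r+1}))`: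
with 0-based indexing, paper index `r` corresponds to `r - 1`, so the paper's odd
(resp. even) `r` are the even (resp. odd) residues below. Each partial product is
over pairwise disjoint transpositions, so any fixed order gives the same element. -/
def cyclePerm (m : ℕ) (j : ℕ → ℤ) : Equiv.Perm ℤ :=
  (((List.range (m - 1)).filter (fun r => r % 2 = 0)).map
      (fun r => Equiv.swap (j r) (j (r + 1)))).prod *
  (((List.range (m - 1)).filter (fun r => r % 2 = 1)).map
      (fun r => Equiv.swap (j r) (j (r + 1)))).prod

lemma swap_commute' {α : Type*} [DecidableEq α] {a b c d : α} (h1 : a≠c) (h2 : a≠d) (h3 : b≠c) (h4 : b≠d) :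
    Commute (Equiv.swap a b) (Equiv.swap c d) := by
  apply Equiv.Perm.Disjoint.commute
  intro x
  rcases eq_or_ne x a with rfl|hxa
  · right; exact Equiv.swap_apply_of_ne_of_ne h1 h2
  rcases eq_or_ne x b with rfl|hxb
  · right; exact Equiv.swap_apply_of_ne_of_ne h3 h4
  · left; exact Equiv.swap_apply_of_ne_of_ne hxa hxb

lemma swap_rot' {α : Type*} [DecidableEq α] {a b c : α} (hab : a≠b) (hbc : b≠c) (hac : a≠c) :
    Equiv.swap b c * Equiv.swap a b = Equiv.swap a b * Equiv.swap a c := by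
  ext x
  simp only [Equiv.Perm.mul_apply, Equiv.swap_apply_def]
  split_ifs <;> simp_all

lemma range_eq' (a b : ℕ) (h : a = b + 1) : List.range a = List.range b ++ [b] := by
  subst h; rw [List.range_succ]

lemma filter_singleton_ne {n : ℕ} {c : ℕ} (h : ¬ (n % 2 = c)) :
    List.filter (fun r => decide (r % 2 = c)) [n] = [] := by
  simp [List.filter_singleton, h]

lemma filter_singleton_eq {n : ℕ} {c : ℕ} (h : n % 2 = c) :
    List.filter (fun r => decide (r % 2 = c)) [n] = [n] := by
  simp [List.filter_singleton, h]

lemma regroup {G : Type*} [Group G] (A B s1 s2 sw : G) (hc : s2 * B = B * s2)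
    (hss : s2 * s1 = s1 * sw) : A * s2 * (B * s1) = A * (B * s1) * sw := by
  rw [mul_assoc A s2, ← mul_assoc s2, hc, mul_assoc B, hss, ← mul_assoc B, ← mul_assoc]

def pIdx (m : ℕ) : ℕ := if m % 2 = 0 then m - 1 else m - 2

lemma cyclePerm_step (m : ℕ) (hm : 1 ≤ m) (j : ℕ → ℤ)
    (hmono : ∀ r s : ℕ, r < s → s < m + 1 → j r < j s) :
    cyclePerm (m+1) j = cyclePerm m j * Equiv.swap (j (pIdx m)) (j m) := by
  have hne : ∀ a b : ℕ, a < b → b < m + 1 → j a ≠ j b := fun a b h1 h2 =>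
    ne_of_lt (hmono a b h1 h2)
  rcases eq_or_ne m 1 with rfl | hm1
  · simp [cyclePerm, pIdx, List.range_succ]
  rcases Nat.even_or_odd m with he | ho
  · -- m even ≥ 2
    obtain ⟨k, hk⟩ : ∃ k, m = 2*k+2 := by
      rcases he with ⟨r, rfl⟩; exact ⟨r-1, by omega⟩
    subst hk
    have hp : pIdx (2*k+2) = 2*k+1 := by unfold pIdx; split <;> omega
    rw [hp]
    simp only [cyclePerm, Nat.add_sub_cancel]
    rw [show (2*k+2:ℕ)-1 = 2*k+1 from by omega,
      range_eq' (2*k+2) (2*k+1) (by omega)]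
    simp only [List.filter_append, List.map_append, List.prod_append]
    rw [filter_singleton_ne (n := 2*k+1) (c := 0) (by omega),
      filter_singleton_eq (n := 2*k+1) (c := 1) (by omega)]
    simp only [List.map_cons, List.map_nil, List.prod_cons, List.prod_nil, mul_one,
      List.append_nil]
    rw [show (2:ℕ)*k+1+1 = 2*k+2 from by omega]
    simp only [mul_assoc]
  · -- m odd ≥ 3
    obtain ⟨p, hp'⟩ : ∃ p, m = 2*p+3 := by
      rcases ho with ⟨r, rfl⟩; exact ⟨r-1, by omega⟩
    subst hp'
    have hp : pIdx (2*p+3) = 2*p+1 := by unfold pIdx; split <;> omega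
    rw [hp]
    simp only [cyclePerm, Nat.add_sub_cancel]
    rw [show (2*p+3:ℕ)-1 = 2*p+2 from by omega,
      range_eq' (2*p+3) (2*p+2) (by omega), range_eq' (2*p+2) (2*p+1) (by omega)]
    simp only [List.filter_append, List.map_append, List.prod_append]
    simp only [filter_singleton_eq (n := 2*p+2) (c := 0) (by omega),
      filter_singleton_ne (n := 2*p+2) (c := 1) (by omega),
      filter_singleton_ne (n := 2*p+1) (c := 0) (by omega),
      filter_singleton_eq (n := 2*p+1) (c := 1) (by omega)]
    simp only [List.map_cons, List.map_nil, List.prod_cons, List.prod_nil, mul_one,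
      List.append_nil]
    have hcomm : Commute (Equiv.swap (j (2*p+2)) (j (2*p+2+1)))
        ((List.map (fun r => Equiv.swap (j r) (j (r + 1)))
          (List.filter (fun r => decide (r % 2 = 1)) (List.range (2*p+1)))).prod) := by
      apply Commute.list_prod_right
      intro x hx
      simp only [List.mem_map, List.mem_filter, List.mem_range] at hx
      obtain ⟨r, ⟨hr, _⟩, rfl⟩ := hx
      exact (swap_commute' (hne _ _ (by omega) (by omega)) (hne _ _ (by omega) (by omega))
        (hne _ _ (by omega) (by omega)) (hne _ _ (by omega) (by omega))).symm
    have hrot : Equiv.swap (j (2*p+2)) (j (2*p+2+1)) * Equiv.swap (j (2*p+1)) (j (2*p+1+1)) =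
        Equiv.swap (j (2*p+1)) (j (2*p+1+1)) * Equiv.swap (j (2*p+1)) (j (2*p+3)) := by
      rw [show (2:ℕ)*p+2+1 = 2*p+3 from by omega, show (2:ℕ)*p+1+1 = 2*p+2 from by omega]
      exact swap_rot' (hne _ _ (by omega) (by omega)) (hne _ _ (by omega) (by omega))
        (hne _ _ (by omega) (by omega))
    exact regroup _ _ _ _ _ hcomm.eq hrot

lemma formPerm_pow_fix {α : Type*} [DecidableEq α] (l : List α) (x : α) (hx : x ∉ l) (n : ℕ) :
    (l.formPerm ^ n) x = x := by
  induction n with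
  | zero => simp
  | succ n ih =>
    rw [pow_succ, Equiv.Perm.mul_apply, List.formPerm_apply_of_notMem hx, ih]

lemma cyclePerm_eq_formPerm (j : ℕ → ℤ) :
    ∀ m : ℕ, 1 ≤ m → (∀ r s : ℕ, r < s → s < m → j r < j s) →
    ∃ L : List ℤ, cyclePerm m j = (L ++ [j (pIdx m)]).formPerm ∧
      (L ++ [j (pIdx m)]).Nodup ∧ (L ++ [j (pIdx m)]).length = m ∧
      (∀ x, x ∈ L ++ [j (pIdx m)] ↔ ∃ i < m, j i = x) := by
  intro m
  induction m with
  | zero => omega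
  | succ m ih =>
    intro _ hmono
    rcases Nat.eq_zero_or_pos m with rfl | hm
    · have hp1 : pIdx 1 = 0 := by unfold pIdx; norm_num
      rw [hp1]
      refine ⟨[], by simp [cyclePerm], by simp, by simp, ?_⟩
      intro x
      simp only [List.nil_append, List.mem_singleton]
      constructor
      · rintro rfl; exact ⟨0, by omega, rfl⟩
      · rintro ⟨i, hi, rfl⟩
        have : i = 0 := by omega
        subst this; rfl
    · obtain ⟨L, hL1, hL2, hL3, hL4⟩ := ih hm (fun r s h1 h2 => hmono r s h1 (by omega))
      have hstep := cyclePerm_step m hm j hmono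
      have hjm_not : j m ∉ L ++ [j (pIdx m)] := by
        intro hmem
        obtain ⟨i, hi, hji⟩ := (hL4 _).1 hmem
        exact absurd hji (ne_of_lt (hmono i m hi (by omega)))
      have hform : cyclePerm (m+1) j = ((L ++ [j (pIdx m)]) ++ [j m]).formPerm := by
        rw [hstep, hL1]
        have := List.formPerm_append_pair L (j (pIdx m)) (j m)
        rw [show (L ++ [j (pIdx m)]) ++ [j m] = L ++ [j (pIdx m), j m] by simp]
        exact this.symm
      have hnodup : ((L ++ [j (pIdx m)]) ++ [j m]).Nodup := by
        rw [List.nodup_append]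
        exact ⟨hL2, List.nodup_singleton _, by
          intro a ha b hb
          simp only [List.mem_singleton] at hb
          subst hb
          exact fun h => hjm_not (h ▸ ha)⟩
      have hlen : ((L ++ [j (pIdx m)]) ++ [j m]).length = m + 1 := by
        simp only [List.length_append, List.length_singleton] at hL3 ⊢
        omega
      have hmem : ∀ x, x ∈ (L ++ [j (pIdx m)]) ++ [j m] ↔ ∃ i < m + 1, j i = x := by
        intro x
        simp only [List.mem_append, List.mem_singleton, hL4 x]
        constructor
        · rintro (⟨i, hi, rfl⟩ | rfl)
          · exact ⟨i, by omega, rfl⟩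
          · exact ⟨m, by omega, rfl⟩
        · rintro ⟨i, hi, rfl⟩
          rcases eq_or_ne i m with rfl | hne
          · exact Or.inr rfl
          · exact Or.inl ⟨i, by omega, rfl⟩
      rcases Nat.even_or_odd m with he | ho
      · -- m even : pIdx (m+1) = pIdx m ; rotate so the list ends at j (pIdx m)
        have hpeq : pIdx (m+1) = pIdx m := by
          unfold pIdx
          rcases he with ⟨r, rfl⟩
          split <;> split <;> omega
        rw [hpeq]
        refine ⟨j m :: L, ?_, ?_, ?_, ?_⟩
        · rw [hform]
          have hrot := List.formPerm_rotate ((L ++ [j (pIdx m)]) ++ [j m]) hnodup (L.length + 1)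
          rw [← hrot]
          congr 1
          rw [List.rotate_eq_drop_append_take (by simp)]
          have hd : ((L ++ [j (pIdx m)]) ++ [j m]).drop (L.length + 1) = [j m] := by
            rw [show L.length + 1 = (L ++ [j (pIdx m)]).length by simp, List.drop_left]
          have ht : ((L ++ [j (pIdx m)]) ++ [j m]).take (L.length + 1) = L ++ [j (pIdx m)] := by
            rw [show L.length + 1 = (L ++ [j (pIdx m)]).length by simp, List.take_left]
          rw [hd, ht]
          simp
        · simp only [List.cons_append]
          exact List.nodup_cons.2 ⟨hjm_not, hL2⟩
        · simp only [List.cons_append, List.length_cons]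
          simp only [List.length_append, List.length_singleton] at hL3
          simp only [List.length_append, List.length_singleton]
          omega
        · intro x
          rw [← hmem x]
          simp only [List.cons_append, List.mem_cons, List.mem_append, List.mem_singleton]
          tauto
      · -- m odd : pIdx (m+1) = m
        have hpeq : pIdx (m+1) = m := by
          unfold pIdx
          rcases ho with ⟨r, rfl⟩
          split <;> omega
        rw [hpeq]
        exact ⟨L ++ [j (pIdx m)], hform, hnodup, hlen, hmem⟩

theorem stmt_16 (m : ℕ) (hm : 1 ≤ m) (j : ℕ → ℤ)
    (hmono : ∀ r s : ℕ, r < s → s < m → j r < j s) :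
    (cyclePerm m j).IsCycleOn (↑((Finset.range m).image j) : Set ℤ) ∧
    ((Finset.range m).image j).card = m ∧
    orderOf (cyclePerm m j) = m := by
  obtain ⟨L, h1, h2, h3, h4⟩ := cyclePerm_eq_formPerm j m hm hmono
  set LL := L ++ [j (pIdx m)] with hLL
  have hset : {a : ℤ | a ∈ LL} = (((Finset.range m).image j : Finset ℤ) : Set ℤ) := by
    ext x
    simp only [Set.mem_setOf_eq, Finset.coe_image, Set.mem_image, Finset.mem_coe,
      Finset.mem_range, h4 x]
  refine ⟨?_, ?_, ?_⟩
  · rw [h1, ← hset]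
    exact h2.isCycleOn_formPerm
  · rw [Finset.card_image_of_injOn, Finset.card_range]
    intro a ha b hb hab
    simp only [Finset.coe_range, Set.mem_Iio] at ha hb
    rcases lt_trichotomy a b with h | h | h
    · exact absurd hab (ne_of_lt (hmono a b h hb))
    · exact h
    · exact absurd hab.symm (ne_of_lt (hmono b a h ha))
  · rw [h1, orderOf_eq_iff hm]
    constructor
    · ext x
      by_cases hx : x ∈ LL
      · have hlt : LL.idxOf x < LL.length := List.idxOf_lt_length_iff.2 hx
        conv_lhs => rw [← List.getElem_idxOf hlt]
        rw [List.formPerm_pow_apply_getElem LL h2 m _ hlt]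
        simp only [Equiv.Perm.one_apply]
        have hmod : (LL.idxOf x + m) % LL.length = LL.idxOf x := by
          rw [h3, Nat.add_mod_right, Nat.mod_eq_of_lt (h3 ▸ hlt)]
        simp only [hmod]
        exact List.getElem_idxOf hlt
      · rw [formPerm_pow_fix LL x hx m, Equiv.Perm.one_apply]
    · intro k hk hk0 hcontr
      have h0 : 0 < LL.length := by omega
      have heq := congrArg (fun f : Equiv.Perm ℤ => f (LL[0]'h0)) hcontr
      simp only [Equiv.Perm.one_apply] at heq
      rw [List.formPerm_pow_apply_getElem LL h2 k 0 h0] at heq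
      have h5 := (h2.getElem_inj_iff).1 heq
      rw [h3, Nat.zero_add, Nat.mod_eq_of_lt hk] at h5
      omega
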